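/- Over the first rational shift algebra R = K(x)⟨s | sx = (x+1)s⟩, the 2×2 diagonal matrix D_1 = Diag(s+x, s(s+x)) is equivalent (via R-invertible matrices U, V with U D_1 V = D) to Diag(1, s(s+x)(s+x−1)); in particular R²/R²D_1 is a cyclic R-module isomorphic to R/R·s(s+x)(s+x−1). -/

import Mathlib

open Matrix

section Aux

variable {R : Type*} [Ring R]

private lemma aux_fin2_mat_eq {α : Type*} (a b c d a' b' c' d' : α)
    (h11 : a = a') (h12 : b = b') (h21 : c = c') (h22 : d = d') :
    !![a, b; c, d] = !![a', b'; c', d'] := by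
  subst h11 h12 h21 h22; rfl

private lemma aux_span_range_unit_mul (U : (Matrix (Fin 2) (Fin 2) R)ˣ)
    (M : Matrix (Fin 2) (Fin 2) R) :
    Submodule.span R (Set.range (U.val * M)) = Submodule.span R (Set.range M) := by
  change Submodule.span R (Set.range (U.val * M).row) = Submodule.span R (Set.range M.row)
  rw [← range_vecMulLinear, ← range_vecMulLinear]
  apply le_antisymm
  · rintro y ⟨v, rfl⟩
    refine ⟨v ᵥ* U.val, ?_⟩
    simp [Matrix.vecMul_vecMul]
  · rintro y ⟨v, rfl⟩
    refine ⟨v ᵥ* (U⁻¹).val, ?_⟩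
    simp only [Matrix.vecMulLinear_apply, Matrix.vecMul_vecMul]
    rw [← Matrix.mul_assoc, Units.inv_mul, Matrix.one_mul]

private noncomputable def aux_vecMulEquiv (V : (Matrix (Fin 2) (Fin 2) R)ˣ) :
    (Fin 2 → R) ≃ₗ[R] (Fin 2 → R) :=
  LinearEquiv.ofLinear
    (Matrix.vecMulLinear V.val)
    (Matrix.vecMulLinear (V⁻¹).val)
    (by
      apply LinearMap.ext; intro v
      simp only [LinearMap.comp_apply, Matrix.vecMulLinear_apply, Matrix.vecMul_vecMul,
        LinearMap.id_apply]
      rw [Units.inv_mul, Matrix.vecMul_one])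
    (by
      apply LinearMap.ext; intro v
      simp only [LinearMap.comp_apply, Matrix.vecMulLinear_apply, Matrix.vecMul_vecMul,
        LinearMap.id_apply]
      rw [Units.mul_inv, Matrix.vecMul_one])

private lemma aux_vecMulEquiv_apply (V : (Matrix (Fin 2) (Fin 2) R)ˣ) (v : Fin 2 → R) :
    aux_vecMulEquiv V v = v ᵥ* V.val := rfl

end Aux

set_option maxHeartbeats 2000000 in
/-- Over the first rational shift algebra `R = K(x)⟨s | sx = (x+1)s⟩` (modelled as
a ring `R` with an embedding `φ` of the rational function field `K(x)` and an element `s`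
satisfying `s·g(x) = g(x+1)·s` for polynomials `g`), the diagonal matrix
`D₁ = Diag(s+x, s(s+x))` is equivalent via `R`-invertible matrices `U, V` (`U·D₁·V = D`) to
`Diag(1, s(s+x)(s+x−1))`; in particular `R²/R²D₁` is a cyclic `R`-module isomorphic to
`R/R·s(s+x)(s+x−1)`. -/
theorem shift_algebra_diag_jacobson_form
    {K R : Type*} [Field K] [Ring R]
    (φ : RatFunc K →+* R) (s : R)
    (hshift : ∀ f : Polynomial K,
      s * φ (algebraMap (Polynomial K) (RatFunc K) f)
        = φ (algebraMap (Polynomial K) (RatFunc K) (f.comp (Polynomial.X + 1))) * s)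
    (x : R) (hx : x = φ (algebraMap (Polynomial K) (RatFunc K) Polynomial.X))
    (D₁ : Matrix (Fin 2) (Fin 2) R)
    (hD₁ : D₁ = Matrix.of ![![s + x, 0], ![0, s * (s + x)]]) :
    (∃ U V : Matrix (Fin 2) (Fin 2) R, IsUnit U ∧ IsUnit V ∧
        U * D₁ * V = Matrix.of ![![(1 : R), 0], ![0, s * (s + x) * (s + x - 1)]]) ∧
    Nonempty
      (((Fin 2 → R) ⧸ Submodule.span R (Set.range fun i => D₁ i))
        ≃ₗ[R] (R ⧸ Ideal.span {s * (s + x) * (s + x - 1)})) := by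
  classical
  set xr : RatFunc K := algebraMap (Polynomial K) (RatFunc K) Polynomial.X with hxr
  have hsx : s * x = x * s + s := by
    have h := hshift Polynomial.X
    rw [Polynomial.X_comp] at h
    rw [hx]
    rw [_root_.map_add, _root_.map_one, _root_.map_add, _root_.map_one, add_mul, one_mul] at h
    exact h
  have hK : (Polynomial.X : Polynomial K) ≠ 0 := Polynomial.X_ne_zero
  have hK2 : (Polynomial.X + 2 : Polynomial K) ≠ 0 := by
    have := Polynomial.X_add_C_ne_zero (2 : K)
    rwa [show (Polynomial.C (2 : K)) = (2 : Polynomial K) from _root_.map_ofNat _ 2] at this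
  have hK1 : (Polynomial.X - 1 : Polynomial K) ≠ 0 := by
    have := Polynomial.X_sub_C_ne_zero (1 : K)
    rwa [_root_.map_one] at this
  have hxr0 : xr ≠ 0 := RatFunc.algebraMap_ne_zero hK
  have hxr2 : xr + 2 ≠ 0 := by
    rw [hxr, show ((2 : RatFunc K) = algebraMap (Polynomial K) (RatFunc K) 2) from
      (_root_.map_ofNat _ 2).symm, ← _root_.map_add]
    exact RatFunc.algebraMap_ne_zero hK2
  have hxr1 : xr - 1 ≠ 0 := by
    rw [hxr, show ((1 : RatFunc K) = algebraMap (Polynomial K) (RatFunc K) 1) from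
      (_root_.map_one _).symm, ← _root_.map_sub]
    exact RatFunc.algebraMap_ne_zero hK1
  set a : R := φ (xr⁻¹) with hadef
  set b : R := φ ((xr + 2)⁻¹) with hbdef
  set c : R := φ ((xr - 1)⁻¹) with hcdef
  have hφx : φ xr = x := hx.symm
  have hφ2 : φ (xr + 2) = x + 2 := by rw [_root_.map_add, hφx, _root_.map_ofNat]
  have hφ1 : φ (xr - 1) = x - 1 := by rw [_root_.map_sub, hφx, _root_.map_one]
  have ha1 : a * x = 1 := by rw [hadef, ← hφx, ← _root_.map_mul, inv_mul_cancel₀ hxr0, _root_.map_one]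
  have hxa : x * a = 1 := by rw [hadef, ← hφx, ← _root_.map_mul, mul_inv_cancel₀ hxr0, _root_.map_one]
  have hb1 : b * (x + 2) = 1 := by
    rw [hbdef, ← hφ2, ← _root_.map_mul, inv_mul_cancel₀ hxr2, _root_.map_one]
  have hx2b : (x + 2) * b = 1 := by
    rw [hbdef, ← hφ2, ← _root_.map_mul, mul_inv_cancel₀ hxr2, _root_.map_one]
  have hc1 : c * (x - 1) = 1 := by
    rw [hcdef, ← hφ1, ← _root_.map_mul, inv_mul_cancel₀ hxr1, _root_.map_one]
  have hx1c : (x - 1) * c = 1 := by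
    rw [hcdef, ← hφ1, ← _root_.map_mul, mul_inv_cancel₀ hxr1, _root_.map_one]
  have hb1' : b * x = 1 - 2 * b := by
    have h := hb1
    rw [mul_add, mul_two, ← two_mul] at h
    exact eq_sub_of_add_eq h
  have hsx2 : ∀ t : R, s * (x * t) = x * (s * t) + s * t := fun t => by
    rw [← mul_assoc, hsx, add_mul, mul_assoc]
  have ha2 : ∀ t : R, a * (x * t) = t := fun t => by
    rw [← mul_assoc, ha1, one_mul]
  have hb2 : ∀ t : R, b * (x * t) = t - 2 * (b * t) := fun t => by
    rw [← mul_assoc, hb1', sub_mul, one_mul, mul_assoc]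
  set d : R := s * (s + x) * (s + x - 1) with hd
  set Ul : Matrix (Fin 2) (Fin 2) R :=
    !![a, a; b * (s * (s + x) + s), b * (s * (s + x) + s) + 1] with hUl
  set Vl : Matrix (Fin 2) (Fin 2) R :=
    !![s + 1, -(s * (s + x)); -1, s + x - 1] with hVl
  set Dm' : Matrix (Fin 2) (Fin 2) R := !![a, 0; 0, b] with hDm'
  set L2 : Matrix (Fin 2) (Fin 2) R := !![1, 0; s * (s + x) + s, 1] with hL2
  set T2 : Matrix (Fin 2) (Fin 2) R := !![1, 1; 0, x + 2] with hT2
  set P : Matrix (Fin 2) (Fin 2) R := !![0, 1; 1, 0] with hP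
  set Li : Matrix (Fin 2) (Fin 2) R := !![1, 0; -(s + 1), 1] with hLi
  set T : Matrix (Fin 2) (Fin 2) R := !![(-1 : R), s + x - 1; 0, x - 1] with hT
  have unit_Dm' : IsUnit Dm' := by
    refine ⟨⟨Dm', !![x, 0; 0, x + 2], ?_, ?_⟩, rfl⟩ <;>
    · rw [hDm', Matrix.mul_fin_two, Matrix.one_fin_two]
      refine aux_fin2_mat_eq _ _ _ _ _ _ _ _ ?_ ?_ ?_ ?_ <;>
        first
          | simp [ha1, hxa, hb1, hx2b]
          | noncomm_ring
  have unit_L2 : IsUnit L2 := by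
    refine ⟨⟨L2, !![1, 0; -(s * (s + x) + s), 1], ?_, ?_⟩, rfl⟩ <;>
    · rw [hL2, Matrix.mul_fin_two, Matrix.one_fin_two]
      refine aux_fin2_mat_eq _ _ _ _ _ _ _ _ ?_ ?_ ?_ ?_ <;>
        first | noncomm_ring | simp
  have unit_T2 : IsUnit T2 := by
    refine ⟨⟨T2, !![1, -b; 0, b], ?_, ?_⟩, rfl⟩ <;>
    · rw [hT2, Matrix.mul_fin_two, Matrix.one_fin_two]
      refine aux_fin2_mat_eq _ _ _ _ _ _ _ _ ?_ ?_ ?_ ?_ <;>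
        first
          | simp [hb1, hx2b]
          | (simp only [one_mul, mul_one, zero_mul, mul_zero, add_zero, zero_add, mul_neg,
              neg_mul]; rw [← hb1]; noncomm_ring)
          | noncomm_ring
  have unit_P : IsUnit P := by
    refine ⟨⟨P, P, ?_, ?_⟩, rfl⟩ <;>
    · rw [hP, Matrix.mul_fin_two, Matrix.one_fin_two]
      refine aux_fin2_mat_eq _ _ _ _ _ _ _ _ ?_ ?_ ?_ ?_ <;> simp
  have unit_Li : IsUnit Li := by
    refine ⟨⟨Li, !![1, 0; s + 1, 1], ?_, ?_⟩, rfl⟩ <;>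
    · rw [hLi, Matrix.mul_fin_two, Matrix.one_fin_two]
      refine aux_fin2_mat_eq _ _ _ _ _ _ _ _ ?_ ?_ ?_ ?_ <;>
        first | noncomm_ring | simp
  have unit_T : IsUnit T := by
    refine ⟨⟨T, !![(-1 : R), (s + x - 1) * c; 0, c], ?_, ?_⟩, rfl⟩ <;>
    · rw [hT, Matrix.mul_fin_two, Matrix.one_fin_two]
      refine aux_fin2_mat_eq _ _ _ _ _ _ _ _ ?_ ?_ ?_ ?_ <;>
        first
          | simp [mul_assoc, hc1, hx1c]
          | noncomm_ring
  have hUeq : Dm' * L2 * T2 = Ul := by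
    rw [hDm', hL2, hT2, hUl, Matrix.mul_fin_two, Matrix.mul_fin_two]
    refine aux_fin2_mat_eq _ _ _ _ _ _ _ _ ?_ ?_ ?_ ?_ <;>
      (simp only [mul_add, add_mul, mul_sub, sub_mul, mul_one, one_mul, mul_zero, zero_mul,
        add_zero, zero_add, mul_neg, neg_mul, neg_neg, two_mul, mul_two, mul_assoc,
        hsx2, hsx, ha2, ha1, hb2, hb1'] <;> first | rfl | abel | noncomm_ring)
  have hVeq : P * Li * T = Vl := by
    rw [hP, hLi, hT, hVl, Matrix.mul_fin_two, Matrix.mul_fin_two]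
    refine aux_fin2_mat_eq _ _ _ _ _ _ _ _ ?_ ?_ ?_ ?_ <;>
      (simp only [mul_add, add_mul, mul_sub, sub_mul, mul_one, one_mul, mul_zero, zero_mul,
        add_zero, zero_add, mul_neg, neg_mul, neg_neg, two_mul, mul_two, mul_assoc,
        hsx2, hsx, ha2, ha1, hb2, hb1'] <;> first | rfl | abel | noncomm_ring)
  have unit_Ul : IsUnit Ul := by
    rw [← hUeq]; exact (unit_Dm'.mul unit_L2).mul unit_T2
  have unit_Vl : IsUnit Vl := by
    rw [← hVeq]; exact (unit_P.mul unit_Li).mul unit_T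
  have hmain : Ul * D₁ * Vl = Matrix.of ![![(1 : R), 0], ![0, d]] := by
    rw [Matrix.mul_assoc, hD₁, hVl, show (Matrix.of ![![s + x, 0], ![0, s * (s + x)]]
        : Matrix (Fin 2) (Fin 2) R) = !![s + x, 0; 0, s * (s + x)] from rfl,
      Matrix.mul_fin_two, hUl, Matrix.mul_fin_two, hd,
      show (Matrix.of ![![(1 : R), 0], ![0, s * (s + x) * (s + x - 1)]]
        : Matrix (Fin 2) (Fin 2) R) = !![(1 : R), 0; 0, s * (s + x) * (s + x - 1)] from rfl]
    refine aux_fin2_mat_eq _ _ _ _ _ _ _ _ ?_ ?_ ?_ ?_ <;>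
      (simp only [mul_add, add_mul, mul_sub, sub_mul, mul_one, one_mul, mul_zero, zero_mul,
        add_zero, zero_add, mul_neg, neg_mul, neg_neg, two_mul, mul_two, mul_assoc,
        hsx2, hsx, ha2, ha1, hb2, hb1'] <;> first | rfl | abel | noncomm_ring)
  refine ⟨⟨Ul, Vl, unit_Ul, unit_Vl, hmain⟩, ?_⟩
  obtain ⟨Uu, hUu⟩ := unit_Ul
  obtain ⟨Vu, hVu⟩ := unit_Vl
  set Dm : Matrix (Fin 2) (Fin 2) R := Matrix.of ![![(1 : R), 0], ![0, d]] with hDm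
  set e := aux_vecMulEquiv Vu with he
  have hrowDV : ∀ i, (D₁ * Vl) i = (D₁ i) ᵥ* Vl := fun i => rfl
  have hUDV : Uu.val * (D₁ * Vl) = Dm := by
    rw [← Matrix.mul_assoc, hUu, hmain, hDm]
  have hmap : (Submodule.span R (Set.range fun i => D₁ i)).map (e : (Fin 2 → R) →ₗ[R] _)
      = Submodule.span R (Set.range Dm) := by
    rw [Submodule.map_span]
    have himg : (e : (Fin 2 → R) →ₗ[R] (Fin 2 → R)) '' (Set.range fun i => D₁ i)
        = Set.range (D₁ * Vl) := by
      rw [← Set.range_comp]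
      apply congrArg
      funext i
      show e (D₁ i) = (D₁ * Vl) i
      rw [hrowDV, he, aux_vecMulEquiv_apply, hVu]
    rw [himg, ← hUDV, aux_span_range_unit_mul Uu (D₁ * Vl)]
  set g : (Fin 2 → R) →ₗ[R] R ⧸ Ideal.span {d} :=
    (Ideal.span {d}).mkQ.comp (LinearMap.proj 1) with hg
  have hg_apply : ∀ v : Fin 2 → R, g v = Submodule.Quotient.mk (v 1) := fun v => rfl
  have hg_surj : Function.Surjective g := by
    intro y
    obtain ⟨r, rfl⟩ := Submodule.mkQ_surjective _ y
    exact ⟨![0, r], rfl⟩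
  have hDm0 : Dm 0 = ![1, 0] := rfl
  have hDm1 : Dm 1 = ![0, d] := rfl
  have hker : LinearMap.ker g = Submodule.span R (Set.range Dm) := by
    apply le_antisymm
    · intro v hv
      have hv1 : v 1 ∈ Ideal.span ({d} : Set R) := by
        have h0 : g v = 0 := hv
        rw [hg_apply, Submodule.Quotient.mk_eq_zero] at h0
        exact h0
      obtain ⟨r, hr⟩ := Submodule.mem_span_singleton.mp hv1
      have hvdec : v = v 0 • Dm 0 + r • Dm 1 := by
        funext i
        fin_cases i <;> simp [hDm0, hDm1, ← hr]
      rw [hvdec]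
      exact add_mem
        (Submodule.smul_mem _ _ (Submodule.subset_span ⟨0, rfl⟩))
        (Submodule.smul_mem _ _ (Submodule.subset_span ⟨1, rfl⟩))
    · rw [Submodule.span_le]
      rintro _ ⟨i, rfl⟩
      fin_cases i
      · show g (Dm 0) = 0
        rw [hg_apply, hDm0]
        simp
      · show g (Dm 1) = 0
        rw [hg_apply, hDm1, Submodule.Quotient.mk_eq_zero]
        simpa using Ideal.subset_span (Set.mem_singleton d)
  exact ⟨(Submodule.Quotient.equiv _ _ e hmap).trans
    ((Submodule.quotEquivOfEq _ _ hker.symm).trans (g.quotKerEquivOfSurjective hg_surj))⟩
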